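/- If a symmetric measurable function W : [0,1]² → [0,1] satisfies, for almost every pair (x,x') ∈ A × A (A ⊆ [0,1] measurable with |A| > 0, B ⊆ [0,1] measurable), both ∫_B W(x,y) dy = |B|·p and ∫_B W(x,y)W(x',y) dy = |B|·p², then W(x,y) = p for almost every (x,y) ∈ A × B. -/

import Mathlib

open MeasureTheory Set

lemma integrable_of_bdd {α : Type*} [MeasurableSpace α] {μ : Measure α} [IsFiniteMeasure μ]
    {f : α → ℝ} (hm : Measurable f) (c : ℝ) (hc : ∀ x, |f x| ≤ c) : Integrable f μ :=
  (integrable_const c).mono' hm.aestronglyMeasurable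
    (Filter.Eventually.of_forall (by simpa [Real.norm_eq_abs] using hc))

lemma ae_zero_of_rat_Iic (f : ℝ → ℝ) (hf : Measurable f) (hb : ∀ x, |f x| ≤ 1)
    (A : Set ℝ) (hA : MeasurableSet A) (hAsub : A ⊆ Set.Icc 0 1)
    (h : ∀ q : ℚ, ∫ x in A ∩ Set.Iic (q:ℝ), f x = 0) :
    ∀ᵐ x ∂(volume.restrict A), f x = 0 := by
  haveI : IsFiniteMeasure (volume.restrict A) := by
    constructor
    rw [Measure.restrict_apply_univ]
    exact lt_of_le_of_lt (measure_mono hAsub) (by simp)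
  set g : ℝ → ℝ := A.indicator f with hg
  have hgmeas : Measurable g := hf.indicator hA
  have hgbdd : ∀ x, |g x| ≤ 1 := by
    intro x
    by_cases hx : x ∈ A
    · simpa [hg, indicator_of_mem hx] using hb x
    · simp [hg, indicator_of_notMem hx]
  have hgint : Integrable g volume := by
    rw [hg, integrable_indicator_iff hA]
    exact integrable_of_bdd hf 1 hb
  -- integral over rational Iic is zero
  have hIic : ∀ q : ℚ, ∫ x in Set.Iic (q:ℝ), g x = 0 := by
    intro q
    rw [hg, setIntegral_indicator hA, Set.inter_comm]
    exact h q
  -- total integral is zero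
  have htot : ∫ x, g x = 0 := by
    have h1 : ∫ x in Set.Iic (2:ℝ), g x = 0 := by
      have := hIic 2; simpa using this
    have h2 : ∫ x in (Set.Iic (2:ℝ))ᶜ, g x = 0 := by
      apply setIntegral_eq_zero_of_forall_eq_zero
      intro x hx
      simp only [Set.mem_compl_iff, Set.mem_Iic, not_le] at hx
      have hxA : x ∉ A := fun hxa => by
        have := (hAsub hxa).2; linarith
      simp [hg, indicator_of_notMem hxA]
    have := integral_add_compl (measurableSet_Iic : MeasurableSet (Set.Iic (2:ℝ))) hgint
    rw [h1, h2] at this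
    linarith [this]
  -- all measurable sets
  have hall : ∀ s : Set ℝ, MeasurableSet s → ∫ x in s, g x = 0 := by
    intro s hs
    refine MeasurableSpace.induction_on_inter (C := fun s _ => ∫ x in s, g x = 0) Real.borel_eq_generateFrom_Iic_rat
      Real.isPiSystem_Iic_rat ?_ ?_ ?_ ?_ s hs
    · simp
    · intro t ht
      simp only [Set.mem_iUnion, Set.mem_singleton_iff] at ht
      obtain ⟨q, rfl⟩ := ht
      exact hIic q
    · intro t ht iht
      have h2 := integral_add_compl ht hgint
      rw [iht] at h2
      rw [htot] at h2
      linarith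
    · intro s hd hm ihm
      rw [integral_iUnion hm hd hgint.integrableOn]
      simp [ihm]
  have hgz : g =ᵐ[volume] 0 :=
    hgint.ae_eq_zero_of_forall_setIntegral_eq_zero fun s hs _ => hall s hs
  have hgz' : ∀ᵐ x ∂(volume.restrict A), g x = 0 :=
    ae_restrict_of_ae hgz
  filter_upwards [hgz', ae_restrict_mem hA] with x hx hxA
  rwa [hg, indicator_of_mem hxA] at hx

theorem forced_constant_on_block
    (W : ℝ → ℝ → ℝ) (hWmeas : Measurable (Function.uncurry W))
    (hWsymm : ∀ x y, W x y = W y x)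
    (hW0 : ∀ x y, 0 ≤ W x y) (hW1 : ∀ x y, W x y ≤ 1)
    (A B : Set ℝ) (hA : MeasurableSet A) (hB : MeasurableSet B)
    (hAsub : A ⊆ Set.Icc 0 1) (hBsub : B ⊆ Set.Icc 0 1)
    (hApos : 0 < volume A) (hBpos : 0 < volume B)
    (p : ℝ) (hp : p ∈ Set.Icc (0:ℝ) 1)
    (hmom : ∀ᵐ q ∂((volume.restrict A).prod (volume.restrict A)),
      (∫ y in B, W q.1 y) = (volume B).toReal * p ∧
      (∫ y in B, W q.1 y * W q.2 y) = (volume B).toReal * p ^ 2) :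
    ∀ᵐ q ∂((volume.restrict A).prod (volume.restrict B)), W q.1 q.2 = p := by
  classical
  haveI hFA : IsFiniteMeasure (volume.restrict A) := by
    constructor; rw [Measure.restrict_apply_univ]
    exact lt_of_le_of_lt (measure_mono hAsub) (by simp)
  haveI hFB : IsFiniteMeasure (volume.restrict B) := by
    constructor; rw [Measure.restrict_apply_univ]
    exact lt_of_le_of_lt (measure_mono hBsub) (by simp)
  set c := (volume B).toReal with hc
  have mWl : ∀ x, Measurable (fun y => W x y) := fun x => hWmeas.comp measurable_prodMk_left
  have mWr : ∀ y, Measurable (fun x => W x y) :=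
    fun y => hWmeas.comp (measurable_id.prodMk measurable_const)
  have habs : ∀ x y, |W x y - p| ≤ 1 := fun x y =>
    abs_le.2 ⟨by linarith [hW0 x y, hp.2], by linarith [hW1 x y, hp.1]⟩
  have habs2 : ∀ x x' y, |(W x y - p) * (W x' y - p)| ≤ 1 := fun x x' y => by
    rw [abs_mul]
    exact mul_le_one₀ (habs x y) (abs_nonneg _) (habs x' y)
  -- swapped first moment
  have hswap : ∀ᵐ q ∂((volume.restrict A).prod (volume.restrict A)),
      (∫ y in B, W q.2 y) = c * p := by
    have h1 : ∀ᵐ q ∂((volume.restrict A).prod (volume.restrict A)),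
        (∫ y in B, W q.1 y) = c * p := hmom.mono fun q hq => hq.1
    have h2 := (Measure.measurePreserving_swap (μ := volume.restrict A)
      (ν := volume.restrict A)).quasiMeasurePreserving.ae h1
    simpa using h2
  -- orthogonality kernel
  have hK : ∀ᵐ q ∂((volume.restrict A).prod (volume.restrict A)),
      ∫ y in B, (W q.1 y - p) * (W q.2 y - p) = 0 := by
    filter_upwards [hmom, hswap] with q hq hq2
    have i1 : Integrable (fun y => W q.1 y * W q.2 y) (volume.restrict B) :=
      integrable_of_bdd ((mWl q.1).mul (mWl q.2)) 1 (fun y => by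
        rw [abs_mul, abs_of_nonneg (hW0 q.1 y), abs_of_nonneg (hW0 q.2 y)]
        exact mul_le_one₀ (hW1 q.1 y) (hW0 q.2 y) (hW1 q.2 y))
    have i2 : Integrable (fun y => W q.1 y) (volume.restrict B) :=
      integrable_of_bdd (mWl q.1) 1 (fun y => abs_le.2 ⟨by linarith [hW0 q.1 y], hW1 q.1 y⟩)
    have i3 : Integrable (fun y => W q.2 y) (volume.restrict B) :=
      integrable_of_bdd (mWl q.2) 1 (fun y => abs_le.2 ⟨by linarith [hW0 q.2 y], hW1 q.2 y⟩)
    have e : ∀ y, (W q.1 y - p) * (W q.2 y - p)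
        = (W q.1 y * W q.2 y - p * W q.1 y) - (p * W q.2 y - p ^ 2) := fun y => by ring
    have key : ∫ y in B, (W q.1 y - p) * (W q.2 y - p)
        = ((∫ y in B, W q.1 y * W q.2 y) - p * ∫ y in B, W q.1 y)
          - (p * (∫ y in B, W q.2 y) - c * p ^ 2) := by
      have j1 : Integrable (fun y => W q.1 y * W q.2 y - p * W q.1 y) (volume.restrict B) :=
        i1.sub (i2.const_mul p)
      have j2 : Integrable (fun y => p * W q.2 y - p ^ 2) (volume.restrict B) :=
        (i3.const_mul p).sub (integrable_const (p ^ 2))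
      simp only [e]
      rw [integral_sub j1 j2, integral_sub i1 (i2.const_mul p),
        integral_sub (i3.const_mul p) (integrable_const (p ^ 2)),
        integral_const_mul, integral_const_mul, integral_const]
      simp [Measure.restrict_apply_univ, hc, smul_eq_mul, Measure.real]
    rw [key, hq.1, hq.2, hq2]
    ring
  -- for each rational cutoff, the averaged column function vanishes
  have hstep2 : ∀ q : ℚ, ∀ᵐ y ∂(volume.restrict B),
      ∫ x in A ∩ Set.Iic (q:ℝ), (W x y - p) = 0 := by
    intro q
    set Aq := A ∩ Set.Iic (q:ℝ) with hAqdef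
    have hAqm : MeasurableSet Aq := hA.inter measurableSet_Iic
    have hAqsub : Aq ⊆ A := Set.inter_subset_left
    haveI : IsFiniteMeasure (volume.restrict Aq) := by
      constructor; rw [Measure.restrict_apply_univ]
      exact lt_of_le_of_lt (measure_mono (hAqsub.trans hAsub)) (by simp)
    have hac : (volume.restrict Aq).prod (volume.restrict Aq)
        ≪ (volume.restrict A).prod (volume.restrict A) :=
      Measure.AbsolutelyContinuous.prod
        (Measure.absolutelyContinuous_of_le (Measure.restrict_mono hAqsub le_rfl))
        (Measure.absolutelyContinuous_of_le (Measure.restrict_mono hAqsub le_rfl))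
    have hKq : ∀ᵐ z ∂((volume.restrict Aq).prod (volume.restrict Aq)),
        ∫ y in B, (W z.1 y - p) * (W z.2 y - p) = 0 := hK.filter_mono hac.ae_le
    set Φ : ℝ → ℝ := fun y => ∫ x in Aq, (W x y - p) with hΦdef
    have hΦmeas : Measurable Φ := by
      have hsm : StronglyMeasurable (fun z : ℝ × ℝ => W z.2 z.1 - p) :=
        ((hWmeas.comp measurable_swap).sub measurable_const).stronglyMeasurable
      exact hsm.integral_prod_right'.measurable
    have hΦbdd : ∀ y, |Φ y| ≤ 1 := by
      intro y
      have h1 : ‖∫ x in Aq, (W x y - p)‖ ≤ 1 * ((volume.restrict Aq) Set.univ).toReal :=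
        norm_integral_le_of_norm_le_const
          (Filter.Eventually.of_forall fun x => by simpa [Real.norm_eq_abs] using habs x y)
      have h2 : ((volume.restrict Aq) Set.univ).toReal ≤ 1 := by
        rw [Measure.restrict_apply_univ]
        have : volume Aq ≤ 1 := le_trans (measure_mono (hAqsub.trans hAsub)) (by simp)
        exact ENNReal.toReal_le_of_le_ofReal one_pos.le (by simpa using this)
      calc |Φ y| ≤ 1 * ((volume.restrict Aq) Set.univ).toReal := by
            simpa [Real.norm_eq_abs] using h1
        _ ≤ 1 := by linarith
    have hIzero : ∫ y in B, (Φ y) ^ 2 = 0 := by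
      have hsq : ∀ y, (Φ y) ^ 2 = ∫ z, (W z.1 y - p) * (W z.2 y - p)
          ∂((volume.restrict Aq).prod (volume.restrict Aq)) := by
        intro y
        rw [integral_prod_mul (f := fun x => W x y - p) (g := fun x => W x y - p)]
        ring
      have hintu : Integrable
          (Function.uncurry fun y (z : ℝ × ℝ) => (W z.1 y - p) * (W z.2 y - p))
          ((volume.restrict B).prod ((volume.restrict Aq).prod (volume.restrict Aq))) := by
        apply integrable_of_bdd _ 1
        · intro w; exact habs2 w.2.1 w.2.2 w.1
        · apply Measurable.mul
          · exact (hWmeas.comp ((measurable_snd.fst).prodMk measurable_fst)).sub measurable_const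
          · exact (hWmeas.comp ((measurable_snd.snd).prodMk measurable_fst)).sub measurable_const
      calc ∫ y in B, (Φ y) ^ 2
          = ∫ y in B, ∫ z, (W z.1 y - p) * (W z.2 y - p)
              ∂((volume.restrict Aq).prod (volume.restrict Aq)) := by simp only [hsq]
        _ = ∫ z, (∫ y in B, (W z.1 y - p) * (W z.2 y - p))
              ∂((volume.restrict Aq).prod (volume.restrict Aq)) := integral_integral_swap hintu
        _ = 0 := by
            rw [integral_eq_zero_of_ae hKq]
    have hΦsqint : Integrable (fun y => (Φ y) ^ 2) (volume.restrict B) := by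
      apply integrable_of_bdd (hΦmeas.pow_const 2) 1
      intro y
      rw [abs_pow]
      exact pow_le_one₀ (abs_nonneg _) (hΦbdd y)
    have hΦ0 : ∀ᵐ y ∂(volume.restrict B), Φ y = 0 := by
      have h := (integral_eq_zero_iff_of_nonneg_ae
        (Filter.Eventually.of_forall fun y => sq_nonneg (Φ y)) hΦsqint).1 hIzero
      filter_upwards [h] with y hy
      exact pow_eq_zero_iff (n := 2) (by norm_num) |>.1 hy
    exact hΦ0
  have hAll : ∀ᵐ y ∂(volume.restrict B), ∀ q : ℚ,
      ∫ x in A ∩ Set.Iic (q:ℝ), (W x y - p) = 0 := (ae_all_iff).2 hstep2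
  have hcols : ∀ᵐ y ∂(volume.restrict B), ∀ᵐ x ∂(volume.restrict A), W x y = p := by
    filter_upwards [hAll] with y hy
    have h := ae_zero_of_rat_Iic (fun x => W x y - p) ((mWr y).sub measurable_const)
      (fun x => habs x y) A hA hAsub hy
    filter_upwards [h] with x hx
    linarith
  -- assemble to the product measure
  have hsmeas : MeasurableSet {z : ℝ × ℝ | W z.2 z.1 ≠ p} :=
    ((hWmeas.comp measurable_swap) (measurableSet_singleton p).compl)
  have hnull : (volume.restrict B).prod (volume.restrict A) {z : ℝ × ℝ | W z.2 z.1 ≠ p} = 0 := by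
    rw [Measure.measure_prod_null hsmeas]
    filter_upwards [hcols] with y hy
    rw [ae_iff] at hy
    simpa using hy
  rw [ae_iff]
  have hgmeas : MeasurableSet {q : ℝ × ℝ | ¬ W q.1 q.2 = p} :=
    hWmeas (measurableSet_singleton p).compl
  rw [← Measure.prod_swap, Measure.map_apply measurable_swap hgmeas]
  convert hnull using 2
  rfl
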